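/- Let f : ℝ^d × ℝ^d → ℝ^d satisfy |f(x,y)| ≤ L(1 + |x-y|)^{q+1} for all x, y ∈ ℝ^d, for constants L > 0 and q > 0. For n ∈ ℕ with n ≥ 1, define the tamed function f^n(x,y) := f(x,y) / (1 + n^{-1/2}|x-y|^{2q}). Then there exists a constant K > 0, independent of n, such that |f^n(x,y)| ≤ K · min{ n^{1/4}(1 + |x-y|), |f(x,y)| } for all x, y ∈ ℝ^d. -/

import Mathlib

set_option maxHeartbeats 1000000


theorem stmt2 (d : ℕ)
    (f : EuclideanSpace ℝ (Fin d) → EuclideanSpace ℝ (Fin d) → EuclideanSpace ℝ (Fin d))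
    (L q : ℝ) (hL : 0 < L) (hq : 0 < q)
    (hf : ∀ x y : EuclideanSpace ℝ (Fin d), ‖f x y‖ ≤ L * (1 + ‖x - y‖) ^ (q + 1)) :
    ∃ K > 0, ∀ n : ℕ, 1 ≤ n → ∀ x y : EuclideanSpace ℝ (Fin d),
      ‖(1 + (n : ℝ) ^ (-(1/2) : ℝ) * ‖x - y‖ ^ (2 * q))⁻¹ • f x y‖
        ≤ K * min ((n : ℝ) ^ ((1 : ℝ)/4) * (1 + ‖x - y‖)) ‖f x y‖ := by
  refine ⟨1 + 2 ^ (q + 1) * L, by positivity, ?_⟩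
  intro n hn x y
  set r : ℝ := ‖x - y‖ with hrdef
  have hr0 : 0 ≤ r := norm_nonneg _
  have hn1 : (1 : ℝ) ≤ (n : ℝ) := by exact_mod_cast hn
  have hn0 : (0 : ℝ) < (n : ℝ) := by linarith
  set s : ℝ := (n : ℝ) ^ (-(1/2) : ℝ) with hsdef
  have hs0 : 0 < s := Real.rpow_pos_of_pos hn0 _
  have hrq0 : 0 ≤ r ^ q := Real.rpow_nonneg hr0 _
  have hr2q0 : 0 ≤ r ^ (2 * q) := Real.rpow_nonneg hr0 _
  set c : ℝ := 1 + s * r ^ (2 * q) with hcdef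
  have hc1 : (1 : ℝ) ≤ c := by
    have := mul_nonneg hs0.le hr2q0
    simp only [hcdef]; linarith
  have hc0 : (0 : ℝ) < c := by linarith
  set m : ℝ := (n : ℝ) ^ ((1 : ℝ)/4) with hmdef
  have hm1 : (1 : ℝ) ≤ m :=
    le_of_eq_of_le (Real.one_rpow ((1:ℝ)/4)).symm
      (Real.rpow_le_rpow zero_le_one hn1 (by norm_num))
  have hm0 : 0 < m := by linarith
  set t : ℝ := (n : ℝ) ^ (-(1/4) : ℝ) with htdef
  have ht0 : 0 < t := Real.rpow_pos_of_pos hn0 _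
  have htm : t * m = 1 := by
    rw [htdef, hmdef, ← Real.rpow_add hn0]
    norm_num
  have htt : t * t = s := by
    rw [htdef, hsdef, ← Real.rpow_add hn0]
    norm_num
  have h2q : r ^ (2 * q) = r ^ q * r ^ q := by
    rw [show (2 : ℝ) * q = q * 2 by ring, Real.rpow_mul hr0,
      show (2 : ℝ) = ((2 : ℕ) : ℝ) by norm_num, Real.rpow_natCast]
    ring
  -- AM-GM: t * r^q ≤ 1 + (t*r^q)^2 = c
  have hamgm : t * r ^ q ≤ c := by
    have h1 : t * r ^ q ≤ 1 + (t * r ^ q) * (t * r ^ q) := by nlinarith [mul_nonneg ht0.le hrq0]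
    have h2 : (t * r ^ q) * (t * r ^ q) = s * r ^ (2 * q) := by
      rw [h2q, ← htt]; ring
    rw [hcdef, ← h2]; exact h1
  have hrq_le : r ^ q ≤ m * c := by
    have := mul_le_mul_of_nonneg_left hamgm hm0.le
    calc r ^ q = m * (t * r ^ q) := by rw [← mul_assoc, mul_comm m t, htm, one_mul]
      _ ≤ m * c := this
  have hone_le : (1 : ℝ) ≤ m * c := by nlinarith
  -- (1+r)^q ≤ 2^q * (1 + r^q)
  have h2q0 : (0 : ℝ) < (2 : ℝ) ^ q := Real.rpow_pos_of_pos two_pos _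
  have hsplit : (1 + r) ^ q ≤ (2 : ℝ) ^ q * (1 + r ^ q) := by
    rcases le_total r 1 with h | h
    · have h1 : (1 + r) ^ q ≤ (2 : ℝ) ^ q :=
        Real.rpow_le_rpow (by linarith) (by linarith) hq.le
      nlinarith
    · have h1 : (1 + r) ^ q ≤ (2 * r) ^ q :=
        Real.rpow_le_rpow (by linarith) (by linarith) hq.le
      have h2 : (2 * r) ^ q = (2:ℝ) ^ q * r ^ q := Real.mul_rpow (by norm_num) hr0
      nlinarith
  have hkey : (1 + r) ^ q ≤ (2 : ℝ) ^ (q + 1) * (m * c) := by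
    have h3 : (2 : ℝ) ^ (q + 1) = (2 : ℝ) ^ q * 2 := by
      rw [Real.rpow_add two_pos, Real.rpow_one]
    calc (1 + r) ^ q ≤ (2 : ℝ) ^ q * (1 + r ^ q) := hsplit
      _ ≤ (2 : ℝ) ^ q * (m * c + m * c) := by
          apply mul_le_mul_of_nonneg_left _ h2q0.le
          linarith [hone_le, hrq_le]
      _ = (2 : ℝ) ^ (q + 1) * (m * c) := by rw [h3]; ring
  -- rewrite the norm
  have hnorm : ‖c⁻¹ • f x y‖ = c⁻¹ * ‖f x y‖ := by
    rw [norm_smul, Real.norm_eq_abs, abs_of_pos (inv_pos.mpr hc0)]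
  have hfb := hf x y
  have hfn0 : (0 : ℝ) ≤ ‖f x y‖ := norm_nonneg _
  have hK1 : (1 : ℝ) ≤ 1 + 2 ^ (q + 1) * L := by
    have : (0:ℝ) < 2 ^ (q + 1) * L := by positivity
    linarith
  show ‖c⁻¹ • f x y‖ ≤ (1 + 2 ^ (q + 1) * L) * min (m * (1 + r)) ‖f x y‖
  rw [hnorm]
  rw [mul_min_of_nonneg _ _ (by linarith : (0:ℝ) ≤ 1 + 2 ^ (q + 1) * L)]
  apply le_min
  · -- bound by K * m * (1+r)
    have hrexp : (1 + r) ^ (q + 1) = (1 + r) ^ q * (1 + r) := by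
      rw [Real.rpow_add (by linarith : (0:ℝ) < 1 + r), Real.rpow_one]
    have h1 : c⁻¹ * ‖f x y‖ ≤ c⁻¹ * (L * ((2 : ℝ) ^ (q + 1) * (m * c) * (1 + r))) := by
      apply mul_le_mul_of_nonneg_left _ (inv_pos.mpr hc0).le
      calc ‖f x y‖ ≤ L * (1 + r) ^ (q + 1) := hfb
        _ = L * ((1 + r) ^ q * (1 + r)) := by rw [hrexp]
        _ ≤ L * ((2 : ℝ) ^ (q + 1) * (m * c) * (1 + r)) := by
            apply mul_le_mul_of_nonneg_left _ hL.le
            apply mul_le_mul_of_nonneg_right hkey (by linarith)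
    have h2 : c⁻¹ * (L * ((2 : ℝ) ^ (q + 1) * (m * c) * (1 + r)))
        = L * (2 : ℝ) ^ (q + 1) * (m * (1 + r)) := by
      field_simp
    calc c⁻¹ * ‖f x y‖ ≤ c⁻¹ * (L * ((2 : ℝ) ^ (q + 1) * (m * c) * (1 + r))) := h1
      _ = L * (2 : ℝ) ^ (q + 1) * (m * (1 + r)) := h2
      _ ≤ (1 + 2 ^ (q + 1) * L) * (m * (1 + r)) := by
          apply mul_le_mul_of_nonneg_right _ (by nlinarith [hm0, hr0])
          nlinarith
  · -- bound by K * ‖f‖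
    have hci : c⁻¹ ≤ 1 := by
      rw [inv_le_one_iff₀]; right; exact hc1
    calc c⁻¹ * ‖f x y‖ ≤ 1 * ‖f x y‖ := mul_le_mul_of_nonneg_right hci hfn0
      _ ≤ (1 + 2 ^ (q + 1) * L) * ‖f x y‖ := mul_le_mul_of_nonneg_right hK1 hfn0
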